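/- Let W be an algebraic Weyl tensor on an n-dimensional Euclidean vector space with n ≥ 4. For any trace-free symmetric 2-tensor S with |S| = 1, one has |SW|² ≤ 8(n-2)|W|²/n, where (SW)_{ijkl} = ∑_m (S_{im}W_{mjkl} + S_{jm}W_{imkl} + S_{km}W_{ijml} + S_{lm}W_{ijkm}). -/

import Mathlib

open Finset

/-- The derivation action of a symmetric 2-tensor `S` on a 4-tensor `W`. -/
def tensorAct (n : ℕ) (S : Fin n → Fin n → ℝ)
    (W : Fin n → Fin n → Fin n → Fin n → ℝ) (i j k l : Fin n) : ℝ :=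
  ∑ m, (S i m * W m j k l + S j m * W i m k l + S k m * W i j m l + S l m * W i j k m)

lemma exists_diag (n : ℕ) (S : Fin n → Fin n → ℝ) (hS : ∀ i j, S i j = S j i) :
    ∃ (O : Fin n → Fin n → ℝ) (lam : Fin n → ℝ),
      (∀ a b, ∑ m, O a m * O b m = if a = b then (1:ℝ) else 0) ∧
      (∀ p q, ∑ a, O a p * O a q = if p = q then (1:ℝ) else 0) ∧
      (∀ i j, S i j = ∑ u, O i u * lam u * O j u) := by
  set A : Matrix (Fin n) (Fin n) ℝ := Matrix.of S with hA
  have hherm : A.IsHermitian := by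
    ext i j
    simp [Matrix.conjTranspose_apply, hA, hS i j]
  set U : Matrix (Fin n) (Fin n) ℝ := (hherm.eigenvectorUnitary : Matrix (Fin n) (Fin n) ℝ) with hU
  refine ⟨fun a m => U a m, hherm.eigenvalues, ?_, ?_, ?_⟩
  · intro a b
    have h1 : U * star U = 1 := (Matrix.mem_unitaryGroup_iff).mp hherm.eigenvectorUnitary.2
    have := congrFun (congrFun h1 a) b
    simpa [Matrix.mul_apply, Matrix.one_apply, Matrix.star_apply] using this
  · intro p q
    have h1 : star U * U = 1 := (Matrix.mem_unitaryGroup_iff').mp hherm.eigenvectorUnitary.2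
    have := congrFun (congrFun h1 p) q
    simpa [Matrix.mul_apply, Matrix.one_apply, Matrix.star_apply, mul_comm] using this
  · intro i j
    have h := hherm.spectral_theorem
    have h2 := congrFun (congrFun h.symm i) j
    have h3 : ∑ x : Fin n, hherm.eigenvalues x * (hherm.eigenvectorBasis x i * hherm.eigenvectorBasis x j) = A i j := by
      simpa [Matrix.mul_apply, Matrix.diagonal_apply, Matrix.star_apply, Finset.mul_sum,
        Finset.sum_mul, mul_comm, mul_left_comm, mul_assoc] using h2
    calc S i j = A i j := rfl
    _ = ∑ x, hherm.eigenvalues x * (hherm.eigenvectorBasis x i * hherm.eigenvectorBasis x j) := h3.symm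
    _ = ∑ u, U i u * hherm.eigenvalues u * U j u := by
        refine Finset.sum_congr rfl fun u _ => ?_
        show _ = U i u * _ * U j u
        rw [hU]
        simp only [Matrix.IsHermitian.eigenvectorUnitary_apply]
        ring


namespace ActWeylAux

variable {n : ℕ}

/-- rotate three nested sums -/
lemma rot3 (f : Fin n → Fin n → Fin n → ℝ) :
    ∑ x, ∑ y, ∑ z, f x y z = ∑ y, ∑ z, ∑ x, f x y z := by
  rw [Finset.sum_comm]
  exact Finset.sum_congr rfl fun y _ => Finset.sum_comm

/-- rotate four nested sums -/
lemma rot4 (f : Fin n → Fin n → Fin n → Fin n → ℝ) :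
    ∑ x, ∑ y, ∑ z, ∑ w, f x y z w = ∑ y, ∑ z, ∑ w, ∑ x, f x y z w := by
  rw [Finset.sum_comm]
  exact Finset.sum_congr rfl fun y _ => rot3 _

/-- push a scalar-weighted contraction through another contraction -/
lemma push (v c : Fin n → ℝ) (Y : Fin n → Fin n → ℝ) :
    ∑ d, v d * ∑ m, c m * Y m d = ∑ m, c m * ∑ d, v d * Y m d := by
  simp only [Finset.mul_sum]
  rw [Finset.sum_comm]
  exact Finset.sum_congr rfl fun m _ => Finset.sum_congr rfl fun d _ => by ring

lemma pull (v : Fin n → ℝ) (k : ℝ) (Y : Fin n → ℝ) :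
    ∑ d, v d * (k * Y d) = k * ∑ d, v d * Y d := by
  rw [Finset.mul_sum]
  exact Finset.sum_congr rfl fun d _ => by ring

/-- contraction against an orthonormal family -/
lemma key_inner (P : Fin n → Fin n → ℝ)
    (hP : ∀ a b, ∑ p, P a p * P b p = if a = b then (1:ℝ) else 0)
    (u v : Fin n → ℝ) :
    ∑ p, (∑ a, P a p * u a) * (∑ b, P b p * v b) = ∑ a, u a * v a := by
  have h1 : ∀ p, (∑ a, P a p * u a) * (∑ b, P b p * v b)
      = ∑ a, ∑ b, (u a * v b) * (P a p * P b p) := by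
    intro p
    rw [Finset.sum_mul_sum]
    exact Finset.sum_congr rfl fun a _ => Finset.sum_congr rfl fun b _ => by ring
  calc ∑ p, (∑ a, P a p * u a) * (∑ b, P b p * v b)
      = ∑ p, ∑ a, ∑ b, (u a * v b) * (P a p * P b p) := Finset.sum_congr rfl fun p _ => h1 p
    _ = ∑ a, ∑ b, ∑ p, (u a * v b) * (P a p * P b p) := rot3 _
    _ = ∑ a, ∑ b, (u a * v b) * ∑ p, P a p * P b p := by
        exact Finset.sum_congr rfl fun a _ => Finset.sum_congr rfl fun b _ =>
          (Finset.mul_sum _ _ _).symm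
    _ = ∑ a, u a * v a := by
        refine Finset.sum_congr rfl fun a _ => ?_
        rw [Finset.sum_eq_single a]
        · simp [hP a a]
        · intro b _ hb
          simp [hP a b, (Ne.symm hb : ¬ a = b)]
        · simp
  
lemma key_sq (P : Fin n → Fin n → ℝ)
    (hP : ∀ a b, ∑ p, P a p * P b p = if a = b then (1:ℝ) else 0)
    (u : Fin n → ℝ) :
    ∑ p, (∑ a, P a p * u a) ^ 2 = ∑ a, (u a) ^ 2 := by
  have := key_inner P hP u u
  simpa [sq] using this

/-- contraction of `S` against an orthonormal eigencolumn -/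
lemma key_S (O : Fin n → Fin n → ℝ) (S : Fin n → Fin n → ℝ) (lam : Fin n → ℝ)
    (hO2 : ∀ p q, ∑ a, O a p * O a q = if p = q then (1:ℝ) else 0)
    (hSd : ∀ i m, S i m = ∑ u, O i u * lam u * O m u)
    (F : Fin n → ℝ) (p : Fin n) :
    ∑ i, O i p * ∑ m, S i m * F m = lam p * ∑ m, O m p * F m := by
  have h1 : ∀ i, O i p * ∑ m, S i m * F m
      = ∑ m, ∑ u, (O i p * O i u) * (lam u * (O m u * F m)) := by
    intro i
    rw [Finset.mul_sum]
    refine Finset.sum_congr rfl fun m _ => ?_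
    rw [hSd i m, Finset.sum_mul, Finset.mul_sum]
    exact Finset.sum_congr rfl fun u _ => by ring
  calc ∑ i, O i p * ∑ m, S i m * F m
      = ∑ i, ∑ m, ∑ u, (O i p * O i u) * (lam u * (O m u * F m)) :=
        Finset.sum_congr rfl fun i _ => h1 i
    _ = ∑ m, ∑ u, ∑ i, (O i p * O i u) * (lam u * (O m u * F m)) := rot3 _
    _ = ∑ m, ∑ u, (∑ i, O i p * O i u) * (lam u * (O m u * F m)) := by
        exact Finset.sum_congr rfl fun m _ => Finset.sum_congr rfl fun u _ =>
          (Finset.sum_mul _ _ _).symm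
    _ = ∑ m, lam p * (O m p * F m) := by
        refine Finset.sum_congr rfl fun m _ => ?_
        rw [Finset.sum_eq_single p]
        · simp [hO2 p p]
        · intro u _ hu
          simp [hO2 p u, (Ne.symm hu : ¬ p = u)]
        · simp
    _ = lam p * ∑ m, O m p * F m := by rw [Finset.mul_sum]

section Transforms

variable (O : Fin n → Fin n → ℝ)

def T1 (X : Fin n → Fin n → Fin n → Fin n → ℝ) : Fin n → Fin n → Fin n → Fin n → ℝ :=
  fun p b c d => ∑ a, O a p * X a b c d
def T2 (X : Fin n → Fin n → Fin n → Fin n → ℝ) : Fin n → Fin n → Fin n → Fin n → ℝ :=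
  fun a q c d => ∑ b, O b q * X a b c d
def T3 (X : Fin n → Fin n → Fin n → Fin n → ℝ) : Fin n → Fin n → Fin n → Fin n → ℝ :=
  fun a b r d => ∑ c, O c r * X a b c d
def T4 (X : Fin n → Fin n → Fin n → Fin n → ℝ) : Fin n → Fin n → Fin n → Fin n → ℝ :=
  fun a b c s => ∑ d, O d s * X a b c d

def TT (X : Fin n → Fin n → Fin n → Fin n → ℝ) : Fin n → Fin n → Fin n → Fin n → ℝ :=
  T1 O (T2 O (T3 O (T4 O X)))

lemma normT1 (hO1 : ∀ a b, ∑ m, O a m * O b m = if a = b then (1:ℝ) else 0) (X : Fin n → Fin n → Fin n → Fin n → ℝ) :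
    ∑ p, ∑ b, ∑ c, ∑ d, (T1 O X p b c d) ^ 2 = ∑ a, ∑ b, ∑ c, ∑ d, (X a b c d) ^ 2 := by
  calc ∑ p, ∑ b, ∑ c, ∑ d, (T1 O X p b c d) ^ 2
      = ∑ b, ∑ c, ∑ d, ∑ p, (T1 O X p b c d) ^ 2 := rot4 _
    _ = ∑ b, ∑ c, ∑ d, ∑ a, (X a b c d) ^ 2 := by
        refine Finset.sum_congr rfl fun b _ => Finset.sum_congr rfl fun c _ =>
          Finset.sum_congr rfl fun d _ => ?_
        exact key_sq O hO1 (fun a => X a b c d)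
    _ = ∑ a, ∑ b, ∑ c, ∑ d, (X a b c d) ^ 2 := (rot4 _).symm

lemma normT2 (hO1 : ∀ a b, ∑ m, O a m * O b m = if a = b then (1:ℝ) else 0) (X : Fin n → Fin n → Fin n → Fin n → ℝ) :
    ∑ a, ∑ q, ∑ c, ∑ d, (T2 O X a q c d) ^ 2 = ∑ a, ∑ b, ∑ c, ∑ d, (X a b c d) ^ 2 := by
  refine Finset.sum_congr rfl fun a _ => ?_
  calc ∑ q, ∑ c, ∑ d, (T2 O X a q c d) ^ 2
      = ∑ c, ∑ d, ∑ q, (T2 O X a q c d) ^ 2 := rot3 _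
    _ = ∑ c, ∑ d, ∑ b, (X a b c d) ^ 2 := by
        refine Finset.sum_congr rfl fun c _ => Finset.sum_congr rfl fun d _ => ?_
        exact key_sq O hO1 (fun b => X a b c d)
    _ = ∑ b, ∑ c, ∑ d, (X a b c d) ^ 2 := (rot3 _).symm

lemma normT3 (hO1 : ∀ a b, ∑ m, O a m * O b m = if a = b then (1:ℝ) else 0) (X : Fin n → Fin n → Fin n → Fin n → ℝ) :
    ∑ a, ∑ b, ∑ r, ∑ d, (T3 O X a b r d) ^ 2 = ∑ a, ∑ b, ∑ c, ∑ d, (X a b c d) ^ 2 := by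
  refine Finset.sum_congr rfl fun a _ => Finset.sum_congr rfl fun b _ => ?_
  calc ∑ r, ∑ d, (T3 O X a b r d) ^ 2
      = ∑ d, ∑ r, (T3 O X a b r d) ^ 2 := Finset.sum_comm
    _ = ∑ d, ∑ c, (X a b c d) ^ 2 := by
        refine Finset.sum_congr rfl fun d _ => ?_
        exact key_sq O hO1 (fun c => X a b c d)
    _ = ∑ c, ∑ d, (X a b c d) ^ 2 := Finset.sum_comm

lemma normT4 (hO1 : ∀ a b, ∑ m, O a m * O b m = if a = b then (1:ℝ) else 0) (X : Fin n → Fin n → Fin n → Fin n → ℝ) :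
    ∑ a, ∑ b, ∑ c, ∑ s, (T4 O X a b c s) ^ 2 = ∑ a, ∑ b, ∑ c, ∑ d, (X a b c d) ^ 2 := by
  refine Finset.sum_congr rfl fun a _ => Finset.sum_congr rfl fun b _ =>
    Finset.sum_congr rfl fun c _ => ?_
  exact key_sq O hO1 (fun d => X a b c d)

lemma normTT (hO1 : ∀ a b, ∑ m, O a m * O b m = if a = b then (1:ℝ) else 0) (X : Fin n → Fin n → Fin n → Fin n → ℝ) :
    ∑ p, ∑ q, ∑ r, ∑ s, (TT O X p q r s) ^ 2 = ∑ a, ∑ b, ∑ c, ∑ d, (X a b c d) ^ 2 := by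
  rw [show TT O X = T1 O (T2 O (T3 O (T4 O X))) from rfl,
    normT1 O hO1, normT2 O hO1, normT3 O hO1, normT4 O hO1]

end Transforms

end ActWeylAux

namespace ActWeylAux

variable {n : ℕ}

lemma neg_push (v f g : Fin n → ℝ) (h : ∀ x, f x = - g x) :
    ∑ x, v x * f x = - ∑ x, v x * g x := by
  rw [← Finset.sum_neg_distrib]
  exact Finset.sum_congr rfl fun x _ => by rw [h x]; ring

lemma anti_helper (u v : Fin n → ℝ) (K : Fin n → Fin n → ℝ) (hK : ∀ a b, K a b = - K b a) :
    ∑ a, u a * ∑ b, v b * K a b = - ∑ a, v a * ∑ b, u b * K a b := by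
  calc ∑ a, u a * ∑ b, v b * K a b
      = ∑ a, ∑ b, u a * (v b * K a b) := by simp [Finset.mul_sum]
    _ = ∑ b, ∑ a, u a * (v b * K a b) := Finset.sum_comm
    _ = ∑ a, ∑ b, u b * (v a * K b a) := rfl
    _ = ∑ a, ∑ b, -(v a * (u b * K a b)) := by
        refine Finset.sum_congr rfl fun a _ => Finset.sum_congr rfl fun b _ => ?_
        rw [hK b a]; ring
    _ = - ∑ a, v a * ∑ b, u b * K a b := by
        simp [Finset.mul_sum, Finset.sum_neg_distrib]

section Act

variable (O S : Fin n → Fin n → ℝ) (lam : Fin n → ℝ)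

def SL1 (X : Fin n → Fin n → Fin n → Fin n → ℝ) : Fin n → Fin n → Fin n → Fin n → ℝ :=
  fun a b c d => ∑ m, S a m * X m b c d
def SL2 (X : Fin n → Fin n → Fin n → Fin n → ℝ) : Fin n → Fin n → Fin n → Fin n → ℝ :=
  fun a b c d => ∑ m, S b m * X a m c d
def SL3 (X : Fin n → Fin n → Fin n → Fin n → ℝ) : Fin n → Fin n → Fin n → Fin n → ℝ :=
  fun a b c d => ∑ m, S c m * X a b m d
def SL4 (X : Fin n → Fin n → Fin n → Fin n → ℝ) : Fin n → Fin n → Fin n → Fin n → ℝ :=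
  fun a b c d => ∑ m, S d m * X a b c m

lemma c1_4 (X) : T4 O (SL1 S X) = SL1 S (T4 O X) := by
  funext a b c s; exact push _ _ _
lemma c1_3 (X) : T3 O (SL1 S X) = SL1 S (T3 O X) := by
  funext a b r d; exact push _ _ _
lemma c1_2 (X) : T2 O (SL1 S X) = SL1 S (T2 O X) := by
  funext a q c d; exact push _ _ _
lemma c2_4 (X) : T4 O (SL2 S X) = SL2 S (T4 O X) := by
  funext a b c s; exact push _ _ _
lemma c2_3 (X) : T3 O (SL2 S X) = SL2 S (T3 O X) := by
  funext a b r d; exact push _ _ _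
lemma c3_4 (X) : T4 O (SL3 S X) = SL3 S (T4 O X) := by
  funext a b c s; exact push _ _ _

variable (hO2 : ∀ p q, ∑ a, O a p * O a q = if p = q then (1:ℝ) else 0)
    (hSd : ∀ i m, S i m = ∑ u, O i u * lam u * O m u)

lemma k1 (hO2 : ∀ p q, ∑ a, O a p * O a q = if p = q then (1:ℝ) else 0)
    (hSd : ∀ i m, S i m = ∑ u, O i u * lam u * O m u) (X) :
    T1 O (SL1 S X) = fun p b c d => lam p * T1 O X p b c d := by
  funext p b c d; exact key_S O S lam hO2 hSd _ p
lemma k2 (hO2 : ∀ p q, ∑ a, O a p * O a q = if p = q then (1:ℝ) else 0)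
    (hSd : ∀ i m, S i m = ∑ u, O i u * lam u * O m u) (X) :
    T2 O (SL2 S X) = fun a q c d => lam q * T2 O X a q c d := by
  funext a q c d; exact key_S O S lam hO2 hSd _ q
lemma k3 (hO2 : ∀ p q, ∑ a, O a p * O a q = if p = q then (1:ℝ) else 0)
    (hSd : ∀ i m, S i m = ∑ u, O i u * lam u * O m u) (X) :
    T3 O (SL3 S X) = fun a b r d => lam r * T3 O X a b r d := by
  funext a b r d; exact key_S O S lam hO2 hSd _ r
lemma k4 (hO2 : ∀ p q, ∑ a, O a p * O a q = if p = q then (1:ℝ) else 0)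
    (hSd : ∀ i m, S i m = ∑ u, O i u * lam u * O m u) (X) :
    T4 O (SL4 S X) = fun a b c s => lam s * T4 O X a b c s := by
  funext a b c s; exact key_S O S lam hO2 hSd _ s

lemma TT_SL1 (hO2 : ∀ p q, ∑ a, O a p * O a q = if p = q then (1:ℝ) else 0)
    (hSd : ∀ i m, S i m = ∑ u, O i u * lam u * O m u) (W) (p q r s : Fin n) :
    TT O (SL1 S W) p q r s = lam p * TT O W p q r s := by
  show T1 O (T2 O (T3 O (T4 O (SL1 S W)))) p q r s = _
  rw [c1_4, c1_3, c1_2, k1 O S lam hO2 hSd]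
  rfl

lemma TT_SL2 (hO2 : ∀ p q, ∑ a, O a p * O a q = if p = q then (1:ℝ) else 0)
    (hSd : ∀ i m, S i m = ∑ u, O i u * lam u * O m u) (W) (p q r s : Fin n) :
    TT O (SL2 S W) p q r s = lam q * TT O W p q r s := by
  show T1 O (T2 O (T3 O (T4 O (SL2 S W)))) p q r s = _
  rw [c2_4, c2_3, k2 O S lam hO2 hSd]
  exact pull _ _ _

lemma TT_SL3 (hO2 : ∀ p q, ∑ a, O a p * O a q = if p = q then (1:ℝ) else 0)
    (hSd : ∀ i m, S i m = ∑ u, O i u * lam u * O m u) (W) (p q r s : Fin n) :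
    TT O (SL3 S W) p q r s = lam r * TT O W p q r s := by
  show T1 O (T2 O (T3 O (T4 O (SL3 S W)))) p q r s = _
  rw [c3_4, k3 O S lam hO2 hSd]
  have e2 : T2 O (fun a b r d => lam r * T3 O (T4 O W) a b r d)
      = fun a q r d => lam r * T2 O (T3 O (T4 O W)) a q r d := by
    funext a q r d; exact pull _ _ _
  rw [e2]
  exact pull _ _ _

lemma TT_SL4 (hO2 : ∀ p q, ∑ a, O a p * O a q = if p = q then (1:ℝ) else 0)
    (hSd : ∀ i m, S i m = ∑ u, O i u * lam u * O m u) (W) (p q r s : Fin n) :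
    TT O (SL4 S W) p q r s = lam s * TT O W p q r s := by
  show T1 O (T2 O (T3 O (T4 O (SL4 S W)))) p q r s = _
  rw [k4 O S lam hO2 hSd]
  have e3 : T3 O (fun a b c s => lam s * T4 O W a b c s)
      = fun a b r s => lam s * T3 O (T4 O W) a b r s := by
    funext a b r s; exact pull _ _ _
  rw [e3]
  have e2 : T2 O (fun a b r s => lam s * T3 O (T4 O W) a b r s)
      = fun a q r s => lam s * T2 O (T3 O (T4 O W)) a q r s := by
    funext a q r s; exact pull _ _ _
  rw [e2]
  exact pull _ _ _

lemma T1_add (f g) : T1 O (fun a b c d => f a b c d + g a b c d)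
    = fun p b c d => T1 O f p b c d + T1 O g p b c d := by
  funext p b c d
  simp [T1, mul_add, Finset.sum_add_distrib]
lemma T2_add (f g) : T2 O (fun a b c d => f a b c d + g a b c d)
    = fun a q c d => T2 O f a q c d + T2 O g a q c d := by
  funext a q c d
  simp [T2, mul_add, Finset.sum_add_distrib]
lemma T3_add (f g) : T3 O (fun a b c d => f a b c d + g a b c d)
    = fun a b r d => T3 O f a b r d + T3 O g a b r d := by
  funext a b r d
  simp [T3, mul_add, Finset.sum_add_distrib]
lemma T4_add (f g) : T4 O (fun a b c d => f a b c d + g a b c d)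
    = fun a b c s => T4 O f a b c s + T4 O g a b c s := by
  funext a b c s
  simp [T4, mul_add, Finset.sum_add_distrib]

lemma TT_add (f g) : TT O (fun a b c d => f a b c d + g a b c d)
    = fun p q r s => TT O f p q r s + TT O g p q r s := by
  show T1 O (T2 O (T3 O (T4 O _))) = _
  rw [T4_add, T3_add, T2_add, T1_add]
  rfl

end Act

end ActWeylAux

namespace ActWeylAux

variable {n : ℕ}

section Anti

variable (O : Fin n → Fin n → ℝ) (W : Fin n → Fin n → Fin n → Fin n → ℝ)

lemma TT_anti12 (hWa : ∀ i j k l, W i j k l = - W j i k l) (p q r s : Fin n) :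
    TT O W p q r s = - TT O W q p r s := by
  have hK : ∀ a b, T3 O (T4 O W) a b r s = - T3 O (T4 O W) b a r s := by
    intro a b
    show (∑ c, O c r * T4 O W a b c s) = -(∑ c, O c r * T4 O W b a c s)
    refine neg_push _ _ _ fun c => ?_
    show (∑ d, O d s * W a b c d) = -(∑ d, O d s * W b a c d)
    exact neg_push _ _ _ fun d => hWa a b c d
  show (∑ a, O a p * ∑ b, O b q * T3 O (T4 O W) a b r s)
      = -(∑ a, O a q * ∑ b, O b p * T3 O (T4 O W) a b r s)
  exact anti_helper _ _ _ hK

lemma TT_anti34 (hWb : ∀ i j k l, W i j k l = - W i j l k) (p q r s : Fin n) :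
    TT O W p q r s = - TT O W p q s r := by
  have hK : ∀ a b, T3 O (T4 O W) a b r s = - T3 O (T4 O W) a b s r := by
    intro a b
    show (∑ c, O c r * ∑ d, O d s * W a b c d) = -(∑ c, O c s * ∑ d, O d r * W a b c d)
    exact anti_helper _ _ _ fun c d => hWb a b c d
  show (∑ a, O a p * ∑ b, O b q * T3 O (T4 O W) a b r s)
      = -(∑ a, O a p * ∑ b, O b q * T3 O (T4 O W) a b s r)
  refine neg_push _ _ _ fun a => ?_
  show (∑ b, O b q * T3 O (T4 O W) a b r s) = -(∑ b, O b q * T3 O (T4 O W) a b s r)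
  exact neg_push _ _ _ fun b => hK a b

lemma TT_zero12 (hWa : ∀ i j k l, W i j k l = - W j i k l) (p r s : Fin n) :
    TT O W p p r s = 0 := by
  have := TT_anti12 O W hWa p p r s
  linarith

lemma TT_zero34 (hWb : ∀ i j k l, W i j k l = - W i j l k) (p q r : Fin n) :
    TT O W p q r r = 0 := by
  have := TT_anti34 O W hWb p q r r
  linarith

end Anti

lemma ind_sq_le (p q r s m : Fin n) (hpq : p ≠ q) (hrs : r ≠ s) :
    ((if m = p then (1:ℝ) else 0) + (if m = q then 1 else 0)
      + (if m = r then 1 else 0) + (if m = s then 1 else 0)) ^ 2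
    ≤ 2 * ((if m = p then (1:ℝ) else 0) + (if m = q then 1 else 0)
      + (if m = r then 1 else 0) + (if m = s then 1 else 0)) := by
  split_ifs <;> first | (norm_num; done) | (exfalso; simp_all; done)

lemma lam_bound (hn : 4 ≤ n) (lam : Fin n → ℝ)
    (h0 : ∑ u, lam u = 0) (h1 : ∑ u, (lam u) ^ 2 = 1)
    (p q r s : Fin n) (hpq : p ≠ q) (hrs : r ≠ s) :
    (lam p + lam q + lam r + lam s) ^ 2 ≤ 8 - 16 / (n : ℝ) := by
  have hn0 : (0:ℝ) < (n:ℝ) := by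
    have : 0 < n := by omega
    exact_mod_cast this
  set w : Fin n → ℝ := fun m =>
    (if m = p then 1 else 0) + (if m = q then 1 else 0)
      + (if m = r then 1 else 0) + (if m = s then 1 else 0) with hw
  have hw_sum : ∑ m, w m = 4 := by
    simp [hw, Finset.sum_add_distrib]
    norm_num
  have hw_lam : ∑ m, w m * lam m = lam p + lam q + lam r + lam s := by
    simp [hw, add_mul, Finset.sum_add_distrib, ite_mul, zero_mul, one_mul]
  have hterm : ∀ m, (w m) ^ 2 ≤ 2 * w m := by
    intro m
    rw [congrFun hw m]
    exact ind_sq_le p q r s m hpq hrs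
  have hw_sq : ∑ m, (w m) ^ 2 ≤ 8 := by
    calc ∑ m, (w m) ^ 2 ≤ ∑ m, 2 * w m :=
          Finset.sum_le_sum fun m _ => hterm m
      _ = 8 := by rw [← Finset.mul_sum, hw_sum]; norm_num
  have key : lam p + lam q + lam r + lam s = ∑ m, (w m - 4 / (n:ℝ)) * lam m := by
    have : ∑ m, (w m - 4 / (n:ℝ)) * lam m
        = ∑ m, w m * lam m - (4 / (n:ℝ)) * ∑ m, lam m := by
      rw [Finset.mul_sum, ← Finset.sum_sub_distrib]
      exact Finset.sum_congr rfl fun m _ => by ring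
    rw [this, h0, hw_lam]
    ring
  have hwc : ∑ m, (w m - 4 / (n:ℝ)) ^ 2 ≤ 8 - 16 / (n:ℝ) := by
    have expand : ∑ m, (w m - 4 / (n:ℝ)) ^ 2
        = ∑ m, (w m) ^ 2 - (8 / (n:ℝ)) * ∑ m, w m + (n:ℝ) * (4 / (n:ℝ)) ^ 2 := by
      have e1 : ∀ m, (w m - 4 / (n:ℝ)) ^ 2
          = (w m) ^ 2 - (8 / (n:ℝ)) * w m + (4 / (n:ℝ)) ^ 2 := by
        intro m; ring
      rw [Finset.sum_congr rfl fun m _ => e1 m]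
      rw [Finset.sum_add_distrib, Finset.sum_sub_distrib, ← Finset.mul_sum,
        Finset.sum_const, Finset.card_univ, Fintype.card_fin, nsmul_eq_mul]
    have e2 : (n:ℝ) * (4 / (n:ℝ)) ^ 2 = 16 / (n:ℝ) := by
      field_simp
      ring
    rw [expand, hw_sum, e2]
    have h32 : 8 / (n:ℝ) * 4 = 32 / (n:ℝ) := by ring
    have h16 : 32 / (n:ℝ) = 16 / (n:ℝ) + 16 / (n:ℝ) := by ring
    linarith
  calc (lam p + lam q + lam r + lam s) ^ 2
      = (∑ m, (w m - 4 / (n:ℝ)) * lam m) ^ 2 := by rw [key]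
    _ ≤ (∑ m, (w m - 4 / (n:ℝ)) ^ 2) * ∑ m, (lam m) ^ 2 :=
        Finset.sum_mul_sq_le_sq_mul_sq Finset.univ _ _
    _ = ∑ m, (w m - 4 / (n:ℝ)) ^ 2 := by rw [h1, mul_one]
    _ ≤ 8 - 16 / (n:ℝ) := hwc

end ActWeylAux

namespace ActWeylAux

lemma TT_act {n : ℕ} (O S : Fin n → Fin n → ℝ) (lam : Fin n → ℝ)
    (hO2 : ∀ p q, ∑ a, O a p * O a q = if p = q then (1:ℝ) else 0)
    (hSd : ∀ i m, S i m = ∑ u, O i u * lam u * O m u)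
    (W : Fin n → Fin n → Fin n → Fin n → ℝ) (p q r s : Fin n) :
    TT O (tensorAct n S W) p q r s = (lam p + lam q + lam r + lam s) * TT O W p q r s := by
  have hsplit : tensorAct n S W = fun i j k l =>
      SL1 S W i j k l + (SL2 S W i j k l + (SL3 S W i j k l + SL4 S W i j k l)) := by
    funext i j k l
    simp only [tensorAct, SL1, SL2, SL3, SL4, Finset.sum_add_distrib]
    ring
  rw [hsplit]
  simp only [TT_add]
  rw [TT_SL1 O S lam hO2 hSd, TT_SL2 O S lam hO2 hSd, TT_SL3 O S lam hO2 hSd,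
    TT_SL4 O S lam hO2 hSd]
  ring

end ActWeylAux

open ActWeylAux

theorem act_weyl_sq_le
    (n : ℕ) (hn : 4 ≤ n)
    (W : Fin n → Fin n → Fin n → Fin n → ℝ)
    (hWa : ∀ i j k l, W i j k l = - W j i k l)
    (hWb : ∀ i j k l, W i j k l = - W i j l k)
    (hWc : ∀ i j k l, W i j k l = W k l i j)
    (hWbianchi : ∀ i j k l, W i j k l + W j k i l + W k i j l = 0)
    (hWtrace : ∀ k l, ∑ i, W i k i l = 0)
    (S : Fin n → Fin n → ℝ)
    (hSsymm : ∀ i j, S i j = S j i)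
    (hStrace : ∑ i, S i i = 0)
    (hSnorm : (∑ i, ∑ j, (S i j) ^ 2) = 1) :
    (∑ i, ∑ j, ∑ k, ∑ l, (tensorAct n S W i j k l) ^ 2) ≤
      8 * ((n : ℝ) - 2) * (∑ i, ∑ j, ∑ k, ∑ l, (W i j k l) ^ 2) / n := by
  classical
  obtain ⟨O, lam, hO1, hO2, hSd⟩ := exists_diag n S hSsymm
  have hlam0 : ∑ u, lam u = 0 := by
    have h : ∑ i, S i i = ∑ u, lam u := by
      calc ∑ i, S i i = ∑ i, ∑ u, O i u * lam u * O i u :=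
            Finset.sum_congr rfl fun i _ => hSd i i
        _ = ∑ u, ∑ i, O i u * lam u * O i u := Finset.sum_comm
        _ = ∑ u, lam u * ∑ i, O i u * O i u := by
            refine Finset.sum_congr rfl fun u _ => ?_
            rw [Finset.mul_sum]
            exact Finset.sum_congr rfl fun i _ => by ring
        _ = ∑ u, lam u := by
            refine Finset.sum_congr rfl fun u _ => ?_
            rw [hO2 u u]
            simp
    rw [← h]
    exact hStrace
  have hlam1 : ∑ u, (lam u) ^ 2 = 1 := by
    have hrow : ∀ i, ∑ j, (S i j) ^ 2 = ∑ u, (O i u * lam u) ^ 2 := by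
      intro i
      have hS' : ∀ j, S i j = ∑ u, (fun u j => O j u) u j * (O i u * lam u) := by
        intro j
        rw [hSd i j]
        exact Finset.sum_congr rfl fun u _ => by ring
      calc ∑ j, (S i j) ^ 2
          = ∑ j, (∑ u, (fun u j => O j u) u j * (O i u * lam u)) ^ 2 :=
            Finset.sum_congr rfl fun j _ => by rw [hS' j]
        _ = ∑ u, (O i u * lam u) ^ 2 :=
            key_sq (fun u j => O j u) (fun a b => hO2 a b) _
    have h : ∑ i, ∑ j, (S i j) ^ 2 = ∑ u, (lam u) ^ 2 := by
      calc ∑ i, ∑ j, (S i j) ^ 2 = ∑ i, ∑ u, (O i u * lam u) ^ 2 :=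
            Finset.sum_congr rfl fun i _ => hrow i
        _ = ∑ u, ∑ i, (O i u * lam u) ^ 2 := Finset.sum_comm
        _ = ∑ u, (lam u) ^ 2 * ∑ i, O i u * O i u := by
            refine Finset.sum_congr rfl fun u _ => ?_
            rw [Finset.mul_sum]
            exact Finset.sum_congr rfl fun i _ => by ring
        _ = ∑ u, (lam u) ^ 2 := by
            refine Finset.sum_congr rfl fun u _ => ?_
            rw [hO2 u u]
            simp
    rw [← h]
    exact hSnorm
  have hnpos : (0:ℝ) < (n:ℝ) := by exact_mod_cast (by omega : 0 < n)
  have key1 : ∑ i, ∑ j, ∑ k, ∑ l, (tensorAct n S W i j k l) ^ 2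
      = ∑ p, ∑ q, ∑ r, ∑ s, ((lam p + lam q + lam r + lam s) * TT O W p q r s) ^ 2 := by
    rw [← normTT O hO1 (tensorAct n S W)]
    exact Finset.sum_congr rfl fun p _ => Finset.sum_congr rfl fun q _ =>
      Finset.sum_congr rfl fun r _ => Finset.sum_congr rfl fun s _ => by
        rw [TT_act O S lam hO2 hSd W p q r s]
  have key2 : ∑ a, ∑ b, ∑ c, ∑ d, (W a b c d) ^ 2
      = ∑ p, ∑ q, ∑ r, ∑ s, (TT O W p q r s) ^ 2 := (normTT O hO1 W).symm
  have hptw : ∀ p q r s : Fin n,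
      ((lam p + lam q + lam r + lam s) * TT O W p q r s) ^ 2
        ≤ (8 - 16 / (n:ℝ)) * (TT O W p q r s) ^ 2 := by
    intro p q r s
    by_cases hpq : p = q
    · subst hpq
      rw [TT_zero12 O W hWa]
      simp
    by_cases hrs : r = s
    · subst hrs
      rw [TT_zero34 O W hWb]
      simp
    · rw [mul_pow]
      exact mul_le_mul_of_nonneg_right
        (lam_bound hn lam hlam0 hlam1 p q r s hpq hrs) (sq_nonneg _)
  calc ∑ i, ∑ j, ∑ k, ∑ l, (tensorAct n S W i j k l) ^ 2
      = ∑ p, ∑ q, ∑ r, ∑ s, ((lam p + lam q + lam r + lam s) * TT O W p q r s) ^ 2 := key1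
    _ ≤ ∑ p, ∑ q, ∑ r, ∑ s, (8 - 16 / (n:ℝ)) * (TT O W p q r s) ^ 2 :=
        Finset.sum_le_sum fun p _ => Finset.sum_le_sum fun q _ =>
          Finset.sum_le_sum fun r _ => Finset.sum_le_sum fun s _ => hptw p q r s
    _ = (8 - 16 / (n:ℝ)) * ∑ p, ∑ q, ∑ r, ∑ s, (TT O W p q r s) ^ 2 := by
        simp only [← Finset.mul_sum]
    _ = (8 - 16 / (n:ℝ)) * ∑ i, ∑ j, ∑ k, ∑ l, (W i j k l) ^ 2 := by rw [← key2]
    _ ≤ 8 * ((n : ℝ) - 2) * (∑ i, ∑ j, ∑ k, ∑ l, (W i j k l) ^ 2) / n := by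
        have heq : 8 - 16 / (n:ℝ) = 8 * ((n:ℝ) - 2) / n := by
          field_simp
          ring
        rw [heq]
        exact le_of_eq (by ring)
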